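/- Let R = (G,Φ,Φ⁺) be a signed groupoid set, a an object, X ⊆ ₐG, and consider the object (a,X) of the generalized Brink–Howlett groupoid G^□. Then: (a) every positive imaginary root of R at a is imaginary for R^□ at (a,X); (b) for every x ∈ X, Φ_x is contained in the set of positive imaginary roots of R^□ at (a,X); (c) if moreover R is faithful and antipodal and X = {x} is a singleton, then the positive imaginary roots of R^□ at (a,{x}) are exactly Φ_x ⊔ (positive imaginary roots of R at a), and the component of R^□ containing (a,{x}) is antipodal. -/
import Mathlib


open CategoryTheory

universe u v

/-- A signed groupoid set: a groupoid `G` acting on a family of definitely involuted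
sets `R a` (`a ∈ Ob G`), with involution `neg`, positive parts `pos a`, and the action
commuting with the involution. -/
structure SGS (G : Type u) [Groupoid G] (R : G → Type v) where
  neg : ∀ {a : G}, R a → R a
  pos : ∀ a : G, Set (R a)
  act : ∀ {a b : G}, (b ⟶ a) → R b → R a
  neg_neg : ∀ {a : G} (x : R a), neg (neg x) = x
  pos_iff : ∀ {a : G} (x : R a), x ∈ pos a ↔ neg x ∉ pos a
  act_id : ∀ {a : G} (x : R a), act (𝟙 a) x = x
  act_comp : ∀ {a b c : G} (g : c ⟶ b) (f : b ⟶ a) (x : R c),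
      act f (act g x) = act (g ≫ f) x
  act_neg : ∀ {a b : G} (f : b ⟶ a) (x : R b), act f (neg x) = neg (act f x)

/-- The morphisms of `G` with codomain `a`. -/
abbrev SHoms (G : Type u) [Groupoid G] (a : G) : Type _ := Σ b : G, (b ⟶ a)

namespace SGS

variable {G : Type u} [Groupoid G] {R : G → Type v} (S : SGS G R)

/-- The inversion set of a morphism `f : b ⟶ a`: positive roots at `a` sent to
negative roots at `b` by `f⁻¹`. -/
def Phi {a b : G} (f : b ⟶ a) : Set (R a) :=
  {α | α ∈ S.pos a ∧ S.act (Groupoid.inv f) α ∉ S.pos b}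

/-- The inversion set of an element of `SHoms G a`. -/
def PhiS {a : G} (g : SHoms G a) : Set (R a) := S.Phi g.2

/-- `S` is faithful if only identity morphisms have empty inversion set. -/
def Faithful : Prop :=
  ∀ ⦃a b : G⦄ (f : b ⟶ a), S.Phi f = ∅ → ∃ h : b = a, f = eqToHom h

/-- `j` is an upper bound of `F` in the weak order at `a`. -/
def IsUB {a : G} (F : Set (SHoms G a)) (j : SHoms G a) : Prop :=
  ∀ g ∈ F, S.PhiS g ⊆ S.PhiS j

/-- `j` is a least upper bound of `F` in the weak order at `a`. -/
def IsLUBw {a : G} (F : Set (SHoms G a)) (j : SHoms G a) : Prop :=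
  S.IsUB F j ∧ ∀ k : SHoms G a, S.IsUB F k → S.PhiS j ⊆ S.PhiS k

/-- `S` is complete: the weak order at every object is a complete lattice
(equivalently, every family of morphisms with a common codomain has a join). -/
def Complete : Prop := ∀ (a : G) (F : Set (SHoms G a)), ∃ j : SHoms G a, S.IsLUBw F j

/-- `S` is finite: finitely many objects, morphisms and roots. -/
def FiniteSGS (_S : SGS G R) : Prop :=
  Finite G ∧ (∀ a b : G, Finite (a ⟶ b)) ∧ ∀ a : G, Finite (R a)

/-- A square `(x, w, y, z)`: a commuting square `xw = yz` with `x(Φ_w) = Φ_y`. -/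
def Square {a b c d : G} (x : b ⟶ d) (w : a ⟶ b) (y : c ⟶ d) (z : a ⟶ c) : Prop :=
  w ≫ x = z ≫ y ∧ S.act x '' S.Phi w = S.Phi y

/-- The positive real roots at `a`: the union of all inversion sets at `a`. -/
def posRe (a : G) : Set (R a) := ⋃ g : SHoms G a, S.PhiS g

/-- An atomic morphism: an atom of the weak order at its codomain. -/
def Atomic {a : G} (g : SHoms G a) : Prop :=
  S.PhiS g ≠ ∅ ∧ ∀ h : SHoms G a, S.PhiS h ⊆ S.PhiS g →
    S.PhiS h = ∅ ∨ S.PhiS h = S.PhiS g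

/-- A simple morphism: one whose inversion set is a singleton. -/
def Simple {a b : G} (f : b ⟶ a) : Prop := ∃ α : R a, S.Phi f = {α}

/-- Interval finiteness: every interval `[1ₐ, g]` of a weak order is finite. -/
def IntervalFinite : Prop :=
  ∀ (a : G) (g : SHoms G a), {h : SHoms G a | S.PhiS h ⊆ S.PhiS g}.Finite

/-- Preprincipal: interval finite, and the inversion set of an atomic morphism is
contained in, or disjoint from, any other inversion set at the same object. -/
def Preprincipal : Prop :=
  S.IntervalFinite ∧ ∀ (a : G) (s g : SHoms G a), S.Atomic s →
    S.PhiS s ⊆ S.PhiS g ∨ S.PhiS s ∩ S.PhiS g = ∅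

/-- Antipodal: the weak order at each object has a maximum element. -/
def Antipodal : Prop :=
  ∀ a : G, ∃ ω : SHoms G a, ∀ g : SHoms G a, S.PhiS g ⊆ S.PhiS ω

end SGS

namespace SGS

variable {G : Type u} [Groupoid G] {R : G → Type v} (S : SGS G R)

/-- `f : a ⟶ b` underlies a morphism `(a, X) ⟶ (b, Y)` of the generalized
Brink–Howlett groupoid `G^□` iff there is a bijection `σ : X → Y` with
`f(Φ_g) = Φ_{σ g}` for all `g ∈ X`. -/
def IsBHHom {a b : G} (X : Set (SHoms G a)) (Y : Set (SHoms G b)) (f : a ⟶ b) :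
    Prop :=
  ∃ σ : X → Y, Function.Bijective σ ∧
    ∀ g : X, S.act f '' S.PhiS g.1 = S.PhiS (σ g).1

/-- A positive root at `a` which is imaginary for `R` (lies in no inversion set). -/
def Imag {a : G} (α : R a) : Prop :=
  α ∈ S.pos a ∧ ∀ (b : G) (g : b ⟶ a), α ∉ S.Phi g

/-- A positive root at `a` which is imaginary for `R^□` at the object `(a, X)`:
it lies in no inversion set of a morphism of `G^□` with codomain `(a, X)`. -/
def BHImag {a : G} (X : Set (SHoms G a)) (α : R a) : Prop :=
  α ∈ S.pos a ∧ ∀ (b : G) (Y : Set (SHoms G b)) (f : b ⟶ a),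
    S.IsBHHom Y X f → α ∉ S.Phi f

end SGS

namespace SGS

variable {G : Type u} [Groupoid G] {R : G → Type v} (S : SGS G R)

lemma act_act_inv' {a b : G} (f : b ⟶ a) (α : R a) :
    S.act f (S.act (Groupoid.inv f) α) = α := by
  rw [S.act_comp, Groupoid.inv_comp, S.act_id]

lemma act_inv_act' {a b : G} (f : b ⟶ a) (β : R b) :
    S.act (Groupoid.inv f) (S.act f β) = β := by
  rw [S.act_comp, Groupoid.comp_inv, S.act_id]

lemma act_inv_eq_iff' {a b : G} (f : b ⟶ a) {α : R a} {β : R b} :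
    S.act (Groupoid.inv f) α = β ↔ α = S.act f β := by
  constructor
  · rintro rfl
    exact (S.act_act_inv' f α).symm
  · rintro rfl
    exact S.act_inv_act' f β

lemma act_inv_inv' {a b : G} (f : b ⟶ a) (β : R b) :
    S.act (Groupoid.inv (Groupoid.inv f)) β = S.act f β := by
  rw [S.act_inv_eq_iff']
  exact (S.act_inv_act' f β).symm

lemma act_inv_comp' {a b c : G} (k : c ⟶ b) (f : b ⟶ a) (α : R a) :
    S.act (Groupoid.inv (k ≫ f)) α
      = S.act (Groupoid.inv k) (S.act (Groupoid.inv f) α) := by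
  rw [S.act_inv_eq_iff', ← S.act_comp, S.act_act_inv', S.act_act_inv']

lemma neg_mem_pos' {a : G} {α : R a} (h : α ∉ S.pos a) : S.neg α ∈ S.pos a := by
  rw [S.pos_iff (S.neg α), S.neg_neg]
  exact h

lemma act_inv_pos' {a b : G} {f : b ⟶ a} {α : R a} (hpos : α ∈ S.pos a)
    (h : α ∉ S.Phi f) : S.act (Groupoid.inv f) α ∈ S.pos b := by
  by_contra hc
  exact h ⟨hpos, hc⟩

lemma mem_posRe' {b d : G} {g : d ⟶ b} {α : R b} (h : α ∈ S.Phi g) :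
    α ∈ S.posRe b :=
  Set.mem_iUnion.2 ⟨⟨d, g⟩, h⟩

lemma pos_of_posRe' {b : G} {α : R b} (h : α ∈ S.posRe b) : α ∈ S.pos b := by
  obtain ⟨g, hg⟩ := Set.mem_iUnion.1 h
  exact hg.1

lemma not_mem_phi_of_image' {a b c : G} (f : b ⟶ a) (g : c ⟶ b) {α : R a}
    (h : α ∈ S.act f '' S.Phi g) : α ∉ S.Phi f := by
  obtain ⟨β, hβ, rfl⟩ := h
  intro hmem
  exact hmem.2 (by rw [S.act_inv_act']; exact hβ.1)

lemma phi_comp_of' {b c d : G} {f : c ⟶ b} {k : d ⟶ c} {α : R b}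
    (hpos : α ∈ S.pos b) (h : S.act (Groupoid.inv f) α ∈ S.Phi k) :
    α ∈ S.Phi (k ≫ f) :=
  ⟨hpos, by rw [S.act_inv_comp']; exact h.2⟩

lemma posRe_act_inv' {b c : G} {f : c ⟶ b} {α : R b}
    (hre : α ∈ S.posRe b) (hp : S.act (Groupoid.inv f) α ∈ S.pos c) :
    S.act (Groupoid.inv f) α ∈ S.posRe c := by
  obtain ⟨g, hg⟩ := Set.mem_iUnion.1 hre
  refine S.mem_posRe' (g := g.2 ≫ Groupoid.inv f) ⟨hp, ?_⟩
  rw [S.act_inv_comp', S.act_inv_inv', S.act_act_inv']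
  exact hg.2

lemma phi_max_comp' {b : G} (y : SHoms G b) (ω : SHoms G y.1)
    (hω : S.PhiS ω = S.posRe y.1) :
    S.Phi (ω.2 ≫ y.2) = S.posRe b \ S.PhiS y := by
  ext α
  constructor
  · rintro ⟨hpos, hneg⟩
    rw [S.act_inv_comp'] at hneg
    by_cases hγ : S.act (Groupoid.inv y.2) α ∈ S.pos y.1
    · obtain ⟨g, hg⟩ := Set.mem_iUnion.1 (show S.act (Groupoid.inv y.2) α ∈ S.posRe y.1 by
        rw [← hω]; exact ⟨hγ, hneg⟩)
      exact ⟨S.mem_posRe' (S.phi_comp_of' hpos hg), fun hx => hx.2 hγ⟩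
    · exfalso
      have h1 : S.neg (S.act (Groupoid.inv y.2) α) ∈ S.Phi (Groupoid.inv y.2) := by
        refine ⟨S.neg_mem_pos' hγ, ?_⟩
        rw [S.act_neg, S.act_inv_inv', S.act_act_inv']
        intro hc
        exact (S.pos_iff α).1 hpos hc
      have h2 : S.neg (S.act (Groupoid.inv y.2) α) ∈ S.PhiS ω := by
        rw [hω]; exact S.mem_posRe' h1
      have h3 := h2.2
      rw [S.act_neg] at h3
      exact hneg ((S.pos_iff _).2 h3)
  · rintro ⟨hre, hny⟩
    have hpos : α ∈ S.pos b := S.pos_of_posRe' hre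
    have hγ : S.act (Groupoid.inv y.2) α ∈ S.pos y.1 := S.act_inv_pos' hpos hny
    have hγre : S.act (Groupoid.inv y.2) α ∈ S.PhiS ω := by
      rw [hω]; exact S.posRe_act_inv' hre hγ
    exact ⟨hpos, by rw [S.act_inv_comp']; exact hγre.2⟩

lemma image_posRe_diff' {b c : G} (m : c ⟶ b) :
    S.act m '' (S.posRe c \ S.Phi (Groupoid.inv m)) = S.posRe b \ S.Phi m := by
  ext α
  constructor
  · rintro ⟨β, ⟨hre, hni⟩, rfl⟩
    obtain ⟨k, hk⟩ := Set.mem_iUnion.1 hre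
    have hβpos : β ∈ S.pos c := hk.1
    have hαpos : S.act m β ∈ S.pos b := by
      by_contra hc
      exact hni ⟨hβpos, by rwa [S.act_inv_inv']⟩
    refine ⟨S.mem_posRe' (g := k.2 ≫ m) ⟨hαpos, ?_⟩,
      fun hc => hc.2 (by rw [S.act_inv_act']; exact hβpos)⟩
    rw [S.act_inv_comp', S.act_inv_act']
    exact hk.2
  · rintro ⟨hre, hnm⟩
    have hαpos : α ∈ S.pos b := S.pos_of_posRe' hre
    have hβpos := S.act_inv_pos' hαpos hnm
    refine ⟨S.act (Groupoid.inv m) α, ⟨S.posRe_act_inv' hre hβpos, ?_⟩,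
      S.act_act_inv' m α⟩
    intro hc
    exact hc.2 (by rw [S.act_inv_inv', S.act_act_inv']; exact hαpos)

lemma max_phiS' {b : G} {ω : SHoms G b} (hω : ∀ g : SHoms G b, S.PhiS g ⊆ S.PhiS ω) :
    S.PhiS ω = S.posRe b := by
  apply le_antisymm
  · exact fun α h => S.mem_posRe' h
  · intro α h
    obtain ⟨g, hg⟩ := Set.mem_iUnion.1 h
    exact hω g hg

lemma exists_max' (hA : S.Antipodal) {b : G} (y : SHoms G b) :
    ∃ (c : G) (m : c ⟶ b) (d : G) (z : d ⟶ c),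
      S.act m '' S.Phi z = S.PhiS y ∧ S.Phi m = S.posRe b \ S.PhiS y := by
  obtain ⟨ω, hω⟩ := hA y.1
  obtain ⟨ωb, hωb⟩ := hA b
  have hm : S.Phi (ω.2 ≫ y.2) = S.posRe b \ S.PhiS y :=
    S.phi_max_comp' y ω (S.max_phiS' hω)
  have hz : S.Phi (ωb.2 ≫ Groupoid.inv (ω.2 ≫ y.2))
      = S.posRe ω.1 \ S.Phi (Groupoid.inv (ω.2 ≫ y.2)) :=
    S.phi_max_comp' (⟨b, Groupoid.inv (ω.2 ≫ y.2)⟩ : SHoms G ω.1) ωb (S.max_phiS' hωb)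
  refine ⟨ω.1, ω.2 ≫ y.2, ωb.1, ωb.2 ≫ Groupoid.inv (ω.2 ≫ y.2), ?_, hm⟩
  rw [hz, S.image_posRe_diff', hm, Set.diff_diff_cancel_left]
  exact fun α h => S.mem_posRe' (g := y.2) h

lemma isBHHom_singleton' {b c : G} (m : c ⟶ b) (z : SHoms G c) (y : SHoms G b)
    (h : S.act m '' S.PhiS z = S.PhiS y) : S.IsBHHom {z} {y} m := by
  refine ⟨fun _ => ⟨y, Set.mem_singleton _⟩, ⟨?_, ?_⟩, ?_⟩
  · intro p q _
    exact Subtype.ext ((Set.mem_singleton_iff.1 p.2).trans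
      (Set.mem_singleton_iff.1 q.2).symm)
  · intro t
    exact ⟨⟨z, Set.mem_singleton _⟩, Subtype.ext (Set.mem_singleton_iff.1 t.2).symm⟩
  · rintro ⟨g, hg⟩
    rw [Set.mem_singleton_iff] at hg
    subst hg
    exact h

lemma partA' {a : G} (X : Set (SHoms G a)) {α : R a} (h : S.Imag α) :
    S.BHImag X α :=
  ⟨h.1, fun b _ f _ => h.2 b f⟩

lemma partB' {a : G} {X : Set (SHoms G a)} {x : SHoms G a} (hx : x ∈ X) :
    S.PhiS x ⊆ {α : R a | S.BHImag X α} := by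
  intro α hα
  refine ⟨hα.1, ?_⟩
  rintro b Y f ⟨σ, hbij, hσ⟩
  obtain ⟨g, hg⟩ := hbij.2 ⟨x, hx⟩
  refine S.not_mem_phi_of_image' f g.1.2 ?_
  show α ∈ S.act f '' S.PhiS g.1
  rw [hσ g, hg]
  exact hα

end SGS

/-- (a) every positive imaginary root of `R` at `a` is imaginary for
`R^□` at `(a, X)`; (b) for `x ∈ X`, `Φ_x` consists of positive imaginary roots of
`R^□` at `(a, X)`; (c) if `R` is faithful and antipodal and `X = {x}`, the positive
imaginary roots of `R^□` at `(a, {x})` are exactly `Φ_x ⊔ (imaginary roots at a)`,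
and the component of `R^□` containing `(a, {x})` is antipodal. -/
theorem stmt_17 {G : Type u} [Groupoid G] {R : G → Type v} (S : SGS G R)
    (a : G) (X : Set (SHoms G a)) :
    (∀ α : R a, S.Imag α → S.BHImag X α) ∧
    (∀ x ∈ X, S.PhiS x ⊆ {α : R a | S.BHImag X α}) ∧
    (S.Faithful → S.Antipodal → ∀ x : SHoms G a,
      ({α : R a | S.BHImag {x} α} = S.PhiS x ∪ {α : R a | S.Imag α} ∧
        Disjoint (S.PhiS x) {α : R a | S.Imag α}) ∧
      (∀ (b : G) (Y : Set (SHoms G b)) (f : b ⟶ a), S.IsBHHom Y {x} f →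
        ∃ (c : G) (Z : Set (SHoms G c)) (m : c ⟶ b), S.IsBHHom Z Y m ∧
          ∀ (c' : G) (Z' : Set (SHoms G c')) (h : c' ⟶ b),
            S.IsBHHom Z' Y h → S.Phi h ⊆ S.Phi m)) := by
  refine ⟨fun α h => S.partA' X h, fun x hx => S.partB' hx, ?_⟩
  intro _hF hA x
  constructor
  · constructor
    · ext α
      constructor
      · rintro ⟨hpos, him⟩
        by_cases hx : α ∈ S.PhiS x
        · exact Or.inl hx
        by_cases hi : ∀ (b : G) (g : b ⟶ a), α ∉ S.Phi g
        · exact Or.inr ⟨hpos, hi⟩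
        push_neg at hi
        obtain ⟨b, g, hg⟩ := hi
        obtain ⟨c, m, d, z, hz, hm⟩ := S.exists_max' hA x
        have hαm : α ∈ S.Phi m := by
          rw [hm]; exact ⟨S.mem_posRe' hg, hx⟩
        exact absurd hαm (him c {⟨d, z⟩} m (S.isBHHom_singleton' m ⟨d, z⟩ x hz))
      · rintro (h | h)
        · exact S.partB' (Set.mem_singleton x) h
        · exact S.partA' {x} h
    · rw [Set.disjoint_left]
      intro α hαx hαi
      exact hαi.2 x.1 x.2 hαx
  · rintro b Y f ⟨σ, hbij, hσ⟩
    obtain ⟨y₀, -⟩ := hbij.2 ⟨x, Set.mem_singleton _⟩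
    have hY : Y = {y₀.1} := by
      ext u
      simp only [Set.mem_singleton_iff]
      constructor
      · intro hu
        have h1 : σ ⟨u, hu⟩ = σ y₀ :=
          Subtype.ext ((Set.mem_singleton_iff.1 (σ ⟨u, hu⟩).2).trans
            (Set.mem_singleton_iff.1 (σ y₀).2).symm)
        exact congrArg Subtype.val (hbij.1 h1)
      · rintro rfl
        exact y₀.2
    obtain ⟨c, m, d, z, hz, hm⟩ := S.exists_max' hA y₀.1
    refine ⟨c, {⟨d, z⟩}, m, by rw [hY]; exact S.isBHHom_singleton' m ⟨d, z⟩ y₀.1 hz, ?_⟩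
    rintro c' Z' h ⟨τ, hτbij, hτ⟩ α hα
    rw [hm]
    refine ⟨S.mem_posRe' hα, ?_⟩
    intro hαy
    obtain ⟨g, hg⟩ := hτbij.2 y₀
    refine S.not_mem_phi_of_image' h g.1.2 ?_ hα
    show α ∈ S.act h '' S.PhiS g.1
    rw [hτ g, hg]
    exact hαy
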